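/- Let A_{p,k}(c) be the 2^p × 2^p upper-triangular matrices defined inductively by A_{0,k}(c) = 1 and A_{p+1,k}(c) = [[A_{p,k}(c), c·log(k/(k−1))·I_{2^p}], [0, A_{p,k}(c)]]. Then for any 1 ≤ p, integers s ≥ 1, 2 ≤ k_1 < k_2 < ⋯ < k_s, and constant 0 ≤ c ≤ 1, the operator norm satisfies ‖∏_{i=1}^s A_{p,k_i}(c)‖ ≤ 2^{p−1}·(1 + log^p(k_s/(k_1−1))). -/

import Mathlib

/-- The `2^p × 2^p` upper-triangular matrices `A_{p,k}(c)` defined inductively by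
`A_{0,k}(c) = 1` and
`A_{p+1,k}(c) = [[A_{p,k}(c), c·log(k/(k−1))·I], [0, A_{p,k}(c)]]`. -/
noncomputable def KreissA : (p : ℕ) → ℕ → ℝ → Matrix (Fin (2 ^ p)) (Fin (2 ^ p)) ℝ
  | 0, _, _ => 1
  | p + 1, k, c =>
      Matrix.reindex (finSumFinEquiv.trans (finCongr (by ring)))
        (finSumFinEquiv.trans (finCongr (by ring)))
        (Matrix.fromBlocks (KreissA p k c) ((c * Real.log ((k : ℝ) / ((k : ℝ) - 1))) • 1)
          0 (KreissA p k c))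

/-- The nilpotent part `N_p`, with `A_{p,k}(c) = 1 + c·log(k/(k-1)) • N_p`. -/
noncomputable def KreissN : (p : ℕ) → Matrix (Fin (2 ^ p)) (Fin (2 ^ p)) ℝ
  | 0 => 0
  | p + 1 =>
      Matrix.reindex (finSumFinEquiv.trans (finCongr (by ring)))
        (finSumFinEquiv.trans (finCongr (by ring)))
        (Matrix.fromBlocks (KreissN p) 1 0 (KreissN p))

lemma one_row_sum {n : ℕ} (x : Fin n) : ∑ y, (1 : Matrix (Fin n) (Fin n) ℝ) x y = 1 := by
  rw [Finset.sum_eq_single x]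
  · simp
  · intro b _ hb; exact Matrix.one_apply_ne (Ne.symm hb)
  · simp

lemma one_col_sum {n : ℕ} (y : Fin n) : ∑ x, (1 : Matrix (Fin n) (Fin n) ℝ) x y = 1 := by
  rw [Finset.sum_eq_single y]
  · simp
  · intro b _ hb; exact Matrix.one_apply_ne hb
  · simp

lemma KreissA_eq (p : ℕ) (k : ℕ) (c : ℝ) :
    KreissA p k c = 1 + (c * Real.log ((k : ℝ) / ((k : ℝ) - 1))) • KreissN p := by
  induction p with
  | zero => simp [KreissA, KreissN]
  | succ p ih =>
    rw [KreissA, KreissN, ih]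
    set a := c * Real.log ((k : ℝ) / ((k : ℝ) - 1)) with ha
    have : Matrix.fromBlocks (1 + a • KreissN p) (a • 1) 0 (1 + a • KreissN p)
        = (1 : Matrix (Fin (2 ^ p) ⊕ Fin (2 ^ p)) (Fin (2 ^ p) ⊕ Fin (2 ^ p)) ℝ)
          + a • Matrix.fromBlocks (KreissN p) 1 0 (KreissN p) := by
      conv_rhs => rw [← Matrix.fromBlocks_one, Matrix.fromBlocks_smul, Matrix.fromBlocks_add]
      simp
    rw [this]
    simp [Matrix.reindex_apply, Matrix.submatrix_add, Matrix.submatrix_smul]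
    exact Matrix.submatrix_one _ ((Equiv.injective _).comp (Equiv.injective _))

lemma KreissN_succ_pow (p m : ℕ) :
    KreissN (p + 1) ^ (m + 1) =
      Matrix.reindex (finSumFinEquiv.trans (finCongr (by ring)))
        (finSumFinEquiv.trans (finCongr (by ring)))
        (Matrix.fromBlocks (KreissN p ^ (m + 1)) (((m + 1 : ℕ) : ℝ) • KreissN p ^ m)
          0 (KreissN p ^ (m + 1))) := by
  have base : KreissN (p + 1)
      = Matrix.reindexAlgEquiv ℝ ℝ (finSumFinEquiv.trans (finCongr (by ring)))
        (Matrix.fromBlocks (KreissN p) 1 0 (KreissN p)) := by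
    rw [KreissN, Matrix.reindexAlgEquiv_apply]
  rw [base, ← map_pow, Matrix.reindexAlgEquiv_apply]
  congr 1
  induction m with
  | zero => simp
  | succ m ih =>
    rw [pow_succ, ih, Matrix.fromBlocks_multiply]
    rw [Matrix.mul_zero, add_zero, Matrix.mul_one, Matrix.zero_mul, Matrix.mul_zero, add_zero,
      Matrix.zero_mul, zero_add, Matrix.smul_mul, ← pow_succ, ← pow_succ]
    have hmid : KreissN p ^ (m + 1) + ((m + 1 : ℕ) : ℝ) • KreissN p ^ (m + 1)
        = ((m + 1 + 1 : ℕ) : ℝ) • KreissN p ^ (m + 1) := by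
      have hcast : ((m + 1 + 1 : ℕ) : ℝ) = ((m + 1 : ℕ) : ℝ) + 1 := by push_cast; ring
      rw [hcast, add_smul, one_smul, add_comm]
    rw [hmid]

lemma KreissN_pow_nonneg (p : ℕ) : ∀ m x y, 0 ≤ (KreissN p ^ m) x y := by
  induction p with
  | zero =>
    intro m x y
    match m with
    | 0 => rw [pow_zero]; by_cases h : x = y <;> simp [Matrix.one_apply, h]
    | m + 1 =>
      rw [show KreissN 0 = 0 from rfl, zero_pow (Nat.succ_ne_zero m)]
      simp
  | succ p ih =>
    intro m x y
    match m with
    | 0 => rw [pow_zero]; by_cases h : x = y <;> simp [Matrix.one_apply, h]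
    | m + 1 =>
      rw [KreissN_succ_pow]
      rw [Matrix.reindex_apply, Matrix.submatrix_apply]
      rcases hx : (finSumFinEquiv.trans (finCongr (by ring : 2^p + 2^p = 2^(p+1)))).symm x with x' | x' <;>
        rcases hy : (finSumFinEquiv.trans (finCongr (by ring : 2^p + 2^p = 2^(p+1)))).symm y with y' | y' <;>
        simp only [Matrix.fromBlocks_apply₁₁, Matrix.fromBlocks_apply₁₂,
          Matrix.fromBlocks_apply₂₁, Matrix.fromBlocks_apply₂₂, Matrix.smul_apply,
          Matrix.zero_apply, smul_eq_mul, le_refl]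
      · exact ih _ _ _
      · exact mul_nonneg (by positivity) (ih _ _ _)
      · exact ih _ _ _

lemma KreissN_pow_row_sum (p : ℕ) : ∀ m (x : Fin (2 ^ p)),
    ∑ y, (KreissN p ^ m) x y ≤ (m.factorial : ℝ) * (p.choose m) := by
  induction p with
  | zero =>
    intro m x
    match m with
    | 0 =>
      simp only [pow_zero]
      simp only [Nat.factorial_zero, Nat.choose_zero_right, Nat.cast_one, one_mul]
      first
        | (rw [one_row_sum])
        | (rw [one_col_sum])
    | m + 1 =>
      rw [show KreissN 0 = 0 from rfl, zero_pow (Nat.succ_ne_zero m)]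
      simp
  | succ p ih =>
    intro m x
    match m with
    | 0 =>
      simp only [pow_zero]
      simp only [Nat.factorial_zero, Nat.choose_zero_right, Nat.cast_one, one_mul]
      first
        | (rw [one_row_sum])
        | (rw [one_col_sum])
    | m + 1 =>
      rw [KreissN_succ_pow]
      have e := (finSumFinEquiv.trans (finCongr (by ring : 2^p + 2^p = 2^(p+1))))
      rw [show (∑ y, (Matrix.reindex (finSumFinEquiv.trans (finCongr (by ring)))
          (finSumFinEquiv.trans (finCongr (by ring)))
          (Matrix.fromBlocks (KreissN p ^ (m + 1)) (((m + 1 : ℕ) : ℝ) • KreissN p ^ m)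
            0 (KreissN p ^ (m + 1)))) x y)
          = ∑ z, (Matrix.fromBlocks (KreissN p ^ (m + 1)) (((m + 1 : ℕ) : ℝ) • KreissN p ^ m)
            0 (KreissN p ^ (m + 1)))
            ((finSumFinEquiv.trans (finCongr (by ring : 2^p + 2^p = 2^(p+1)))).symm x) z from by
        rw [← Equiv.sum_comp (finSumFinEquiv.trans (finCongr (by ring : 2^p + 2^p = 2^(p+1)))).symm]
        rfl]
      rw [Fintype.sum_sum_type]
      have key : ((m+1).factorial : ℝ) * (p.choose (m+1)) + ((m+1 : ℕ) : ℝ) * ((m.factorial : ℝ) * (p.choose m))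
          = ((m+1).factorial : ℝ) * ((p+1).choose (m+1)) := by
        rw [Nat.choose_succ_succ p m, Nat.factorial_succ]
        push_cast
        ring
      rcases hx : (finSumFinEquiv.trans (finCongr (by ring : 2^p + 2^p = 2^(p+1)))).symm x with x' | x'
      · simp only [Matrix.fromBlocks_apply₁₁, Matrix.fromBlocks_apply₁₂, Matrix.smul_apply,
          smul_eq_mul]
        rw [← Finset.mul_sum]
        calc ∑ y, (KreissN p ^ (m+1)) x' y + ((m+1 : ℕ) : ℝ) * ∑ y, (KreissN p ^ m) x' y
            ≤ ((m+1).factorial : ℝ) * (p.choose (m+1)) + ((m+1 : ℕ) : ℝ) * ((m.factorial : ℝ) * (p.choose m)) :=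
              add_le_add (ih (m+1) x')
                (mul_le_mul_of_nonneg_left (ih m x') (by positivity))
          _ ≤ _ := key.le
      · simp only [Matrix.fromBlocks_apply₂₁, Matrix.fromBlocks_apply₂₂, Matrix.zero_apply]
        rw [Finset.sum_const, smul_zero, zero_add]
        calc ∑ y, (KreissN p ^ (m+1)) x' y ≤ ((m+1).factorial : ℝ) * (p.choose (m+1)) := ih (m+1) x'
          _ ≤ ((m+1).factorial : ℝ) * ((p+1).choose (m+1)) :=
              mul_le_mul_of_nonneg_left
                (by exact_mod_cast Nat.choose_le_choose (m+1) (Nat.le_succ p)) (by positivity)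

lemma KreissN_pow_col_sum (p : ℕ) : ∀ m (y : Fin (2 ^ p)),
    ∑ x, (KreissN p ^ m) x y ≤ (m.factorial : ℝ) * (p.choose m) := by
  induction p with
  | zero =>
    intro m y
    match m with
    | 0 =>
      simp only [pow_zero]
      simp only [Nat.factorial_zero, Nat.choose_zero_right, Nat.cast_one, one_mul]
      first
        | (rw [one_row_sum])
        | (rw [one_col_sum])
    | m + 1 =>
      rw [show KreissN 0 = 0 from rfl, zero_pow (Nat.succ_ne_zero m)]
      simp
  | succ p ih =>
    intro m y
    match m with
    | 0 =>
      simp only [pow_zero]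
      simp only [Nat.factorial_zero, Nat.choose_zero_right, Nat.cast_one, one_mul]
      first
        | (rw [one_row_sum])
        | (rw [one_col_sum])
    | m + 1 =>
      rw [KreissN_succ_pow]
      rw [show (∑ x, (Matrix.reindex (finSumFinEquiv.trans (finCongr (by ring)))
          (finSumFinEquiv.trans (finCongr (by ring)))
          (Matrix.fromBlocks (KreissN p ^ (m + 1)) (((m + 1 : ℕ) : ℝ) • KreissN p ^ m)
            0 (KreissN p ^ (m + 1)))) x y)
          = ∑ z, (Matrix.fromBlocks (KreissN p ^ (m + 1)) (((m + 1 : ℕ) : ℝ) • KreissN p ^ m)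
            0 (KreissN p ^ (m + 1)))
            z ((finSumFinEquiv.trans (finCongr (by ring : 2^p + 2^p = 2^(p+1)))).symm y) from by
        rw [← Equiv.sum_comp (finSumFinEquiv.trans (finCongr (by ring : 2^p + 2^p = 2^(p+1)))).symm]
        rfl]
      rw [Fintype.sum_sum_type]
      have key : ((m+1).factorial : ℝ) * (p.choose (m+1)) + ((m+1 : ℕ) : ℝ) * ((m.factorial : ℝ) * (p.choose m))
          = ((m+1).factorial : ℝ) * ((p+1).choose (m+1)) := by
        rw [Nat.choose_succ_succ p m, Nat.factorial_succ]
        push_cast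
        ring
      rcases hy : (finSumFinEquiv.trans (finCongr (by ring : 2^p + 2^p = 2^(p+1)))).symm y with y' | y'
      · simp only [Matrix.fromBlocks_apply₁₁, Matrix.fromBlocks_apply₂₁, Matrix.zero_apply]
        rw [Finset.sum_const, smul_zero, add_zero]
        calc ∑ x, (KreissN p ^ (m+1)) x y' ≤ ((m+1).factorial : ℝ) * (p.choose (m+1)) := ih (m+1) y'
          _ ≤ ((m+1).factorial : ℝ) * ((p+1).choose (m+1)) :=
              mul_le_mul_of_nonneg_left
                (by exact_mod_cast Nat.choose_le_choose (m+1) (Nat.le_succ p)) (by positivity)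
      · simp only [Matrix.fromBlocks_apply₁₂, Matrix.fromBlocks_apply₂₂, Matrix.smul_apply,
          smul_eq_mul]
        rw [← Finset.mul_sum]
        calc ((m+1 : ℕ) : ℝ) * ∑ x, (KreissN p ^ m) x y' + ∑ x, (KreissN p ^ (m+1)) x y'
            ≤ ((m+1 : ℕ) : ℝ) * ((m.factorial : ℝ) * (p.choose m)) + ((m+1).factorial : ℝ) * (p.choose (m+1)) :=
              add_le_add (mul_le_mul_of_nonneg_left (ih m y') (by positivity)) (ih (m+1) y')
          _ ≤ _ := by linarith [key]

lemma KreissN_pow_eq_zero (p : ℕ) : KreissN p ^ (p + 1) = 0 := by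
  induction p with
  | zero => rw [show KreissN 0 = 0 from rfl]; simp
  | succ p ih =>
    rw [KreissN_succ_pow]
    have h1 : KreissN p ^ (p + 2) = 0 := by
      rw [pow_succ, ih, Matrix.zero_mul]
    rw [show p + 1 + 1 = p + 2 from rfl, h1, ih, smul_zero, Matrix.fromBlocks_zero]
    simp

/-- Schur test: matrix with nonnegative entries, row and column sums bounded by `R`. -/
lemma opNorm_le_of_row_col {n : ℕ} (M : Matrix (Fin n) (Fin n) ℝ) (R : ℝ) (hR : 0 ≤ R)
    (h0 : ∀ i j, 0 ≤ M i j) (hrow : ∀ i, ∑ j, M i j ≤ R) (hcol : ∀ j, ∑ i, M i j ≤ R) :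
    ‖Matrix.toEuclideanCLM (𝕜 := ℝ) M‖ ≤ R := by
  refine ContinuousLinearMap.opNorm_le_bound _ hR fun v => ?_
  have happ : ∀ i, (Matrix.toEuclideanCLM (𝕜 := ℝ) M v) i = ∑ j, M i j * v j := by
    intro i
    rfl
  rw [EuclideanSpace.norm_eq, EuclideanSpace.norm_eq]
  have key : ∑ i, ‖(Matrix.toEuclideanCLM (𝕜 := ℝ) M v) i‖ ^ 2
      ≤ R ^ 2 * ∑ j, ‖v j‖ ^ 2 := by
    have step1 : ∀ i, ‖(Matrix.toEuclideanCLM (𝕜 := ℝ) M v) i‖ ^ 2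
        ≤ R * ∑ j, M i j * v j ^ 2 := by
      intro i
      rw [happ i, Real.norm_eq_abs, sq_abs]
      have cs : (∑ j, M i j * v j) ^ 2 ≤ (∑ j, M i j) * ∑ j, M i j * v j ^ 2 := by
        have h1 : (∑ j, M i j * v j) ^ 2 ≤ (∑ j, Real.sqrt (M i j) * (Real.sqrt (M i j) * v j)) ^ 2 := by
          have he : ∀ j, Real.sqrt (M i j) * (Real.sqrt (M i j) * v j) = M i j * v j := by
            intro j
            rw [← mul_assoc, Real.mul_self_sqrt (h0 i j)]
          rw [Finset.sum_congr rfl fun j _ => he j]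
        have h2 := Finset.sum_mul_sq_le_sq_mul_sq Finset.univ
          (fun j => Real.sqrt (M i j)) (fun j => Real.sqrt (M i j) * v j)
        calc (∑ j, M i j * v j) ^ 2
            ≤ (∑ j, Real.sqrt (M i j) ^ 2) * ∑ j, (Real.sqrt (M i j) * v j) ^ 2 := by
              rw [← Finset.sum_congr rfl fun j _ => (by rw [← mul_assoc, Real.mul_self_sqrt (h0 i j)] :
                Real.sqrt (M i j) * (Real.sqrt (M i j) * v j) = M i j * v j)]
              exact h2
          _ = (∑ j, M i j) * ∑ j, M i j * v j ^ 2 := by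
              congr 1
              · exact Finset.sum_congr rfl fun j _ => Real.sq_sqrt (h0 i j)
              · refine Finset.sum_congr rfl fun j _ => ?_
                rw [mul_pow, Real.sq_sqrt (h0 i j)]
      calc (∑ j, M i j * v j) ^ 2 ≤ (∑ j, M i j) * ∑ j, M i j * v j ^ 2 := cs
        _ ≤ R * ∑ j, M i j * v j ^ 2 := by
            apply mul_le_mul_of_nonneg_right (hrow i)
            exact Finset.sum_nonneg fun j _ => mul_nonneg (h0 i j) (sq_nonneg _)
    calc ∑ i, ‖(Matrix.toEuclideanCLM (𝕜 := ℝ) M v) i‖ ^ 2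
        ≤ ∑ i, R * ∑ j, M i j * v j ^ 2 := Finset.sum_le_sum fun i _ => step1 i
      _ = R * ∑ j, (∑ i, M i j) * v j ^ 2 := by
          rw [← Finset.mul_sum, Finset.sum_comm]
          congr 1
          exact Finset.sum_congr rfl fun j _ => (Finset.sum_mul _ _ _).symm
      _ ≤ R * ∑ j, R * v j ^ 2 := by
          apply mul_le_mul_of_nonneg_left _ hR
          refine Finset.sum_le_sum fun j _ => ?_
          exact mul_le_mul_of_nonneg_right (hcol j) (sq_nonneg _)
      _ = R ^ 2 * ∑ j, ‖v j‖ ^ 2 := by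
          rw [← Finset.mul_sum]
          simp [Real.norm_eq_abs, sq_abs]
          ring
  calc Real.sqrt (∑ i, ‖(Matrix.toEuclideanCLM (𝕜 := ℝ) M v) i‖ ^ 2)
      ≤ Real.sqrt (R ^ 2 * ∑ j, ‖v j‖ ^ 2) := Real.sqrt_le_sqrt key
    _ = R * Real.sqrt (∑ j, ‖v j‖ ^ 2) := by
        rw [Real.sqrt_mul (sq_nonneg R), Real.sqrt_sq hR]

lemma pow_aux (a S : ℝ) (ha : 0 ≤ a) (hS : 0 ≤ S) :
    ∀ j : ℕ, S ^ (j + 1) + (j + 1 : ℝ) * a * S ^ j ≤ (a + S) ^ (j + 1) := by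
  intro j
  induction j with
  | zero => simp; linarith
  | succ j ih =>
    have h1 : (a + S) ^ (j + 2) = (a + S) * (a + S) ^ (j + 1) := by ring
    have h2 : (a + S) * (S ^ (j + 1) + ((j : ℝ) + 1) * a * S ^ j) ≤ (a + S) * (a + S) ^ (j + 1) :=
      mul_le_mul_of_nonneg_left (by push_cast at ih ⊢ <;> linarith [ih]) (by linarith)
    have h3 : S ^ (j + 2) + ((j : ℝ) + 2) * a * S ^ (j + 1)
        ≤ (a + S) * (S ^ (j + 1) + ((j : ℝ) + 1) * a * S ^ j) := by
      have hp : 0 ≤ S ^ j := pow_nonneg hS j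
      have e1 : S ^ (j + 1) = S ^ j * S := pow_succ S j
      have e2 : S ^ (j + 2) = S ^ j * S * S := by rw [pow_succ, pow_succ]
      have hnn : 0 ≤ ((j : ℝ) + 1) * (a * a) * S ^ j := by positivity
      have expand : (a + S) * (S ^ j * S + ((j : ℝ) + 1) * a * S ^ j)
          = S ^ j * S * S + ((j : ℝ) + 2) * a * (S ^ j * S) + ((j : ℝ) + 1) * (a * a) * S ^ j := by
        ring
      rw [e1, e2, expand]
      linarith
    have hgoal : S ^ (j + 1 + 1) + ((j + 1 : ℕ) + 1 : ℝ) * a * S ^ (j + 1) ≤ (a + S) ^ (j + 1 + 1) := by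
      have e3 : (j + 1 + 1 : ℕ) = j + 2 := rfl
      rw [e3]
      push_cast
      linarith
    push_cast at hgoal ⊢
    linarith
  
lemma prod_expand (p : ℕ) (l : List ℝ) (hl : ∀ a ∈ l, 0 ≤ a) :
    ∃ co : ℕ → ℝ,
      ((l.map fun a => (1 : Matrix (Fin (2 ^ p)) (Fin (2 ^ p)) ℝ) + a • KreissN p).prod
        = ∑ m ∈ Finset.range (p + 1), co m • KreissN p ^ m)
      ∧ (∀ m, 0 ≤ co m) ∧ (∀ m, co m * m.factorial ≤ l.sum ^ m) := by
  induction l with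
  | nil =>
    refine ⟨fun m => if m = 0 then 1 else 0, ?_, ?_, ?_⟩
    · rw [List.map_nil, List.prod_nil]
      rw [Finset.sum_eq_single 0]
      · simp
      · intro m _ hm; simp [hm]
      · intro h; exact absurd (Finset.mem_range.mpr (Nat.succ_pos p)) h
    · intro m; by_cases h : m = 0 <;> simp [h]
    · intro m
      match m with
      | 0 => simp
      | m + 1 => simp [Nat.succ_ne_zero]
  | cons a t ih =>
    obtain ⟨co, hco, hnn, hb⟩ := ih fun x hx => hl x (List.mem_cons_of_mem a hx)
    have ha : 0 ≤ a := hl a List.mem_cons_self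
    have htsum : 0 ≤ t.sum := List.sum_nonneg fun x hx => hl x (List.mem_cons_of_mem a hx)
    refine ⟨fun m => Nat.casesOn m (co 0) (fun j => co (j + 1) + a * co j), ?_, ?_, ?_⟩
    · rw [List.map_cons, List.prod_cons, hco]
      rw [add_mul, one_mul, Matrix.smul_mul, Finset.mul_sum]
      have h1 : ∀ m, KreissN p * (co m • KreissN p ^ m) = co m • KreissN p ^ (m + 1) := by
        intro m
        rw [Matrix.mul_smul, ← pow_succ']
      rw [Finset.sum_congr rfl fun m _ => h1 m]
      rw [Finset.smul_sum]
      -- now : Σ co m • N^m + Σ (a • co m • N^(m+1)) = Σ co' m • N^m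
      rw [Finset.sum_range_succ (fun m => a • co m • KreissN p ^ (m + 1)) p]
      rw [KreissN_pow_eq_zero, smul_zero, smul_zero, add_zero]
      conv_lhs => rw [Finset.sum_range_succ' (fun m => co m • KreissN p ^ m) p]
      conv_rhs => rw [Finset.sum_range_succ' (fun m =>
        (Nat.casesOn m (co 0) (fun j => co (j + 1) + a * co j) : ℝ) • KreissN p ^ m) p]
      simp only [pow_zero]
      rw [add_assoc, add_comm (co 0 • (1 : Matrix (Fin (2 ^ p)) (Fin (2 ^ p)) ℝ)), ← add_assoc,
        ← Finset.sum_add_distrib]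
      congr 1
      refine Finset.sum_congr rfl fun j _ => ?_
      rw [add_smul]
      congr 1
      rw [smul_smul]
    · intro m
      match m with
      | 0 => exact hnn 0
      | j + 1 => exact add_nonneg (hnn (j + 1)) (mul_nonneg ha (hnn j))
    · intro m
      match m with
      | 0 =>
        simpa using hb 0
      | j + 1 =>
        have key : (co (j + 1) + a * co j) * ((j + 1).factorial : ℝ)
            ≤ t.sum ^ (j + 1) + (j + 1 : ℝ) * a * t.sum ^ j := by
          rw [Nat.factorial_succ]
          push_cast
          have e1 : (co (j + 1) + a * co j) * ((j + 1 : ℝ) * (j.factorial : ℝ))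
              = (co (j + 1) * ((j + 1).factorial : ℝ)) + (j + 1 : ℝ) * a * (co j * (j.factorial : ℝ)) := by
            rw [Nat.factorial_succ]; push_cast; ring
          rw [e1]
          have b1 := hb (j + 1)
          have b2 := hb j
          have hfact : (0 : ℝ) < j.factorial := by positivity
          have b3 : ((j : ℝ) + 1) * a * (co j * (j.factorial : ℝ))
              ≤ ((j : ℝ) + 1) * a * t.sum ^ j :=
            mul_le_mul_of_nonneg_left b2 (by positivity)
          push_cast at b1 ⊢
          linarith
        calc (co (j + 1) + a * co j) * ((j + 1).factorial : ℝ)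
            ≤ t.sum ^ (j + 1) + (j + 1 : ℝ) * a * t.sum ^ j := key
          _ ≤ (a + t.sum) ^ (j + 1) := pow_aux a t.sum ha htsum (j)
          _ = (a :: t).sum ^ (j + 1) := by rw [List.sum_cons]

lemma log_telescope (s : ℕ) (hs : 1 ≤ s) (k : ℕ → ℕ)
    (hmono : StrictMonoOn k (Set.Icc 1 s)) (h2 : 2 ≤ k 1) :
    ((List.range s).map fun i => Real.log ((k (i + 1) : ℝ) / ((k (i + 1) : ℝ) - 1))).sum
      ≤ Real.log ((k s : ℝ) / ((k 1 : ℝ) - 1)) := by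
  have hk : ∀ i, 1 ≤ i → i ≤ s → 2 ≤ k i := by
    intro i h1 hi
    rcases eq_or_lt_of_le h1 with h | h
    · rw [← h]; exact h2
    · exact le_trans h2 (hmono ⟨le_refl 1, hs⟩ ⟨h1, hi⟩ h).le
  have hterm : ∀ i, 1 ≤ i → i ≤ s →
      Real.log ((k i : ℝ) / ((k i : ℝ) - 1)) = Real.log (k i) - Real.log ((k i : ℝ) - 1) := by
    intro i h1 hi
    have : (2 : ℝ) ≤ (k i : ℝ) := by exact_mod_cast hk i h1 hi
    exact Real.log_div (by linarith) (by linarith)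
  have claim : ∀ t, 1 ≤ t → t ≤ s →
      ((List.range t).map fun i => Real.log ((k (i + 1) : ℝ) / ((k (i + 1) : ℝ) - 1))).sum
        ≤ Real.log (k t) - Real.log ((k 1 : ℝ) - 1) := by
    intro t ht
    induction t, ht using Nat.le_induction with
    | base =>
      intro h1s
      have : ((List.range 1).map fun i =>
          Real.log ((k (i + 1) : ℝ) / ((k (i + 1) : ℝ) - 1))).sum
          = Real.log ((k 1 : ℝ) / ((k 1 : ℝ) - 1)) := by
        rw [show List.range 1 = [0] from rfl, List.map_singleton, List.sum_singleton]
      rw [this, hterm 1 le_rfl h1s]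
    | succ t ht ih =>
      intro hts
      have htle : t ≤ s := le_trans (Nat.le_succ t) hts
      have hsum := ih htle
      rw [show t + 1 = Nat.succ t from rfl, List.sum_range_succ]
      have hlog : Real.log (k t) ≤ Real.log ((k (t + 1) : ℝ) - 1) := by
        have hklt : k t < k (t + 1) := hmono ⟨ht, htle⟩ ⟨le_trans ht (Nat.le_succ t), hts⟩ (Nat.lt_succ_self t)
        have hkle : (k t : ℝ) ≤ (k (t + 1) : ℝ) - 1 := by
          have : (k t : ℝ) + 1 ≤ (k (t + 1) : ℝ) := by exact_mod_cast hklt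
          linarith
        have hpos : (0 : ℝ) < (k t : ℝ) := by
          have : 2 ≤ k t := hk t ht htle
          have : (2 : ℝ) ≤ (k t : ℝ) := by exact_mod_cast this
          linarith
        exact (Real.log_le_log_iff hpos (lt_of_lt_of_le hpos hkle)).mpr hkle
      rw [hterm (t + 1) (by omega) hts]
      linarith
  have := claim s hs le_rfl
  have hk1 : (2 : ℝ) ≤ (k 1 : ℝ) := by exact_mod_cast h2
  have hks : (2 : ℝ) ≤ (k s : ℝ) := by exact_mod_cast hk s hs le_rfl
  rw [Real.log_div (by linarith) (by linarith)]
  exact this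

theorem norm_prod_KreissA_le (p : ℕ) (hp : 1 ≤ p) (s : ℕ) (hs : 1 ≤ s) (k : ℕ → ℕ)
    (hmono : StrictMonoOn k (Set.Icc 1 s)) (h2 : 2 ≤ k 1)
    (c : ℝ) (hc0 : 0 ≤ c) (hc1 : c ≤ 1) :
    ‖Matrix.toEuclideanCLM (𝕜 := ℝ)
        (((List.range s).map fun i => KreissA p (k (i + 1)) c).prod)‖ ≤
      2 ^ (p - 1) * (1 + (Real.log ((k s : ℝ) / ((k 1 : ℝ) - 1))) ^ p) := by
  set L := Real.log ((k s : ℝ) / ((k 1 : ℝ) - 1)) with hLdef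
  have hk : ∀ i, 1 ≤ i → i ≤ s → 2 ≤ k i := by
    intro i h1 hi
    rcases eq_or_lt_of_le h1 with h | h
    · rw [← h]; exact h2
    · exact le_trans h2 (hmono ⟨le_refl 1, hs⟩ ⟨h1, hi⟩ h).le
  -- the list of scalar coefficients
  set g : ℕ → ℝ := fun i => c * Real.log ((k (i + 1) : ℝ) / ((k (i + 1) : ℝ) - 1)) with hgdef
  set l : List ℝ := (List.range s).map g with hldef
  have hlog_nonneg : ∀ i, i < s → 0 ≤ Real.log ((k (i + 1) : ℝ) / ((k (i + 1) : ℝ) - 1)) := by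
    intro i hi
    have h2i : (2 : ℝ) ≤ (k (i + 1) : ℝ) := by
      exact_mod_cast hk (i + 1) (Nat.succ_le_succ (Nat.zero_le i)) hi
    apply Real.log_nonneg
    rw [le_div_iff₀ (by linarith)]
    linarith
  have hl : ∀ a ∈ l, 0 ≤ a := by
    intro a ha
    rw [hldef, List.mem_map] at ha
    obtain ⟨i, hi, rfl⟩ := ha
    rw [List.mem_range] at hi
    exact mul_nonneg hc0 (hlog_nonneg i hi)
  -- rewrite the product
  have hfun : (fun i => KreissA p (k (i + 1)) c)
      = (fun a => (1 : Matrix (Fin (2 ^ p)) (Fin (2 ^ p)) ℝ) + a • KreissN p) ∘ g := by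
    funext i
    exact KreissA_eq p (k (i + 1)) c
  have hlist : ((List.range s).map fun i => KreissA p (k (i + 1)) c)
      = l.map fun a => (1 : Matrix (Fin (2 ^ p)) (Fin (2 ^ p)) ℝ) + a • KreissN p := by
    rw [hfun, hldef, List.map_map]
  obtain ⟨co, hco, hnn, hb⟩ := prod_expand p l hl
  set S := l.sum with hSdef
  have hS0 : 0 ≤ S := List.sum_nonneg hl
  -- S ≤ L
  have hSL : S ≤ L := by
    have hT : S = c * ((List.range s).map fun i =>
        Real.log ((k (i + 1) : ℝ) / ((k (i + 1) : ℝ) - 1))).sum := by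
      rw [hSdef, hldef, hgdef]
      exact List.sum_map_mul_left _ _ _
    have hT0 : 0 ≤ ((List.range s).map fun i =>
        Real.log ((k (i + 1) : ℝ) / ((k (i + 1) : ℝ) - 1))).sum := by
      apply List.sum_nonneg
      intro a ha
      rw [List.mem_map] at ha
      obtain ⟨i, hi, rfl⟩ := ha
      rw [List.mem_range] at hi
      exact hlog_nonneg i hi
    have htel := log_telescope s hs k hmono h2
    calc S = c * _ := hT
      _ ≤ 1 * _ := mul_le_mul_of_nonneg_right hc1 hT0
      _ = _ := one_mul _
      _ ≤ L := htel
  have hL0 : 0 ≤ L := le_trans hS0 hSL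
  -- Schur bound on the product
  set P := ∑ m ∈ Finset.range (p + 1), co m • KreissN p ^ m with hPdef
  have hP0 : ∀ x y, 0 ≤ P x y := by
    intro x y
    rw [hPdef]
    simp only [Matrix.sum_apply, Matrix.smul_apply, smul_eq_mul]
    exact Finset.sum_nonneg fun m _ => mul_nonneg (hnn m) (KreissN_pow_nonneg p m x y)
  have hterm_bound : ∀ m, co m * ((m.factorial : ℝ) * (p.choose m : ℝ)) ≤ S ^ m * (p.choose m : ℝ) := by
    intro m
    rw [← mul_assoc]
    exact mul_le_mul_of_nonneg_right (hb m) (Nat.cast_nonneg _)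
  have hpow : ∑ m ∈ Finset.range (p + 1), S ^ m * (p.choose m : ℝ) = (S + 1) ^ p := by
    rw [add_pow]
    exact Finset.sum_congr rfl fun m _ => by rw [one_pow, mul_one]
  have hProw : ∀ x, ∑ y, P x y ≤ (S + 1) ^ p := by
    intro x
    rw [hPdef]
    simp only [Matrix.sum_apply, Matrix.smul_apply, smul_eq_mul]
    rw [Finset.sum_comm]
    calc ∑ m ∈ Finset.range (p + 1), ∑ y, co m * (KreissN p ^ m) x y
        = ∑ m ∈ Finset.range (p + 1), co m * ∑ y, (KreissN p ^ m) x y := by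
          exact Finset.sum_congr rfl fun m _ => (Finset.mul_sum _ _ _).symm
      _ ≤ ∑ m ∈ Finset.range (p + 1), S ^ m * (p.choose m : ℝ) := by
          refine Finset.sum_le_sum fun m _ => ?_
          calc co m * ∑ y, (KreissN p ^ m) x y
              ≤ co m * ((m.factorial : ℝ) * (p.choose m : ℝ)) :=
                mul_le_mul_of_nonneg_left (KreissN_pow_row_sum p m x) (hnn m)
            _ ≤ S ^ m * (p.choose m : ℝ) := hterm_bound m
      _ = (S + 1) ^ p := hpow
  have hPcol : ∀ y, ∑ x, P x y ≤ (S + 1) ^ p := by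
    intro y
    rw [hPdef]
    simp only [Matrix.sum_apply, Matrix.smul_apply, smul_eq_mul]
    rw [Finset.sum_comm]
    calc ∑ m ∈ Finset.range (p + 1), ∑ x, co m * (KreissN p ^ m) x y
        = ∑ m ∈ Finset.range (p + 1), co m * ∑ x, (KreissN p ^ m) x y := by
          exact Finset.sum_congr rfl fun m _ => (Finset.mul_sum _ _ _).symm
      _ ≤ ∑ m ∈ Finset.range (p + 1), S ^ m * (p.choose m : ℝ) := by
          refine Finset.sum_le_sum fun m _ => ?_
          calc co m * ∑ x, (KreissN p ^ m) x y
              ≤ co m * ((m.factorial : ℝ) * (p.choose m : ℝ)) :=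
                mul_le_mul_of_nonneg_left (KreissN_pow_col_sum p m y) (hnn m)
            _ ≤ S ^ m * (p.choose m : ℝ) := hterm_bound m
      _ = (S + 1) ^ p := hpow
  have hnorm : ‖Matrix.toEuclideanCLM (𝕜 := ℝ) P‖ ≤ (S + 1) ^ p :=
    opNorm_le_of_row_col P ((S + 1) ^ p) (by positivity) hP0 hProw hPcol
  rw [hlist, hco]
  calc ‖Matrix.toEuclideanCLM (𝕜 := ℝ) P‖ ≤ (S + 1) ^ p := hnorm
    _ ≤ (1 + L) ^ p := pow_le_pow_left₀ (by linarith) (by linarith) p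
    _ ≤ 2 ^ (p - 1) * (1 ^ p + L ^ p) := add_pow_le (by norm_num) hL0 p
    _ = 2 ^ (p - 1) * (1 + L ^ p) := by rw [one_pow]
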